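/- For n ≥ 1 let ν_n = 2^{−n} Σ_{j=1}^{2^n} δ_{j/2^n} and let ν = Σ_{n≥1} a_n ν_n with a_n > 0 and Σ_n a_n 2^n = ∞. Then for every λ ∈ [0,1], G(λ) := ∫_ℝ (λ−λ')^{−2} dν(λ') = ∞. Consequently ν-almost every point fails the finiteness condition G(λ) < ∞, i.e., the set {λ ∈ [0,1] : G(λ) < ∞} is empty. -/

import Mathlib

open MeasureTheory
open scoped ENNReal NNReal

/-- The measure `ν = Σ_{n ≥ 1} a_n ν_n`, where `ν_n = 2⁻ⁿ Σ_{j=1}^{2ⁿ} δ_{j/2ⁿ}` is the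
uniform probability measure on the dyadic rationals of order `n` in `(0,1]`. -/
noncomputable def dyadicMeasure (a : ℕ → ℝ) : Measure ℝ :=
  Measure.sum fun n : ℕ =>
    ENNReal.ofReal (a (n + 1)) •
      ((2 ^ (n + 1) : ℝ≥0∞)⁻¹ •
        ∑ j ∈ Finset.Icc (1 : ℕ) (2 ^ (n + 1)), Measure.dirac ((j : ℝ) / 2 ^ (n + 1)))

/-- if `a_n > 0` and `Σ a_n 2ⁿ = ∞`, then for every `λ ∈ [0,1]` the
function `G(λ) = ∫ (λ−λ')⁻² dν(λ')` is infinite; consequently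
`{λ ∈ [0,1] : G(λ) < ∞}` is empty. -/
theorem dyadic_singular_continuous (a : ℕ → ℝ) (ha : ∀ n : ℕ, 1 ≤ n → 0 < a n)
    (hdiv : ∑' n : ℕ, ENNReal.ofReal (a (n + 1)) * 2 ^ (n + 1) = ⊤) :
    (∀ l ∈ Set.Icc (0 : ℝ) 1,
        ∫⁻ t : ℝ, (ENNReal.ofReal ((l - t) ^ 2))⁻¹ ∂(dyadicMeasure a) = ⊤) ∧
      {l ∈ Set.Icc (0 : ℝ) 1 |
        ∫⁻ t : ℝ, (ENNReal.ofReal ((l - t) ^ 2))⁻¹ ∂(dyadicMeasure a) < ⊤} = ∅ := by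
  have key : ∀ l ∈ Set.Icc (0 : ℝ) 1,
      ∫⁻ t : ℝ, (ENNReal.ofReal ((l - t) ^ 2))⁻¹ ∂(dyadicMeasure a) = ⊤ := by
    intro l hl
    obtain ⟨hl0, hl1⟩ := hl
    have hfm : Measurable fun t : ℝ => (ENNReal.ofReal ((l - t) ^ 2))⁻¹ := by
      exact (ENNReal.measurable_ofReal.comp
        ((measurable_const.sub measurable_id).pow_const 2)).inv
    rw [dyadicMeasure, lintegral_sum_measure]
    refine eq_top_iff.mpr ?_
    calc (⊤ : ℝ≥0∞) = ∑' n : ℕ, ENNReal.ofReal (a (n + 1)) * 2 ^ (n + 1) := hdiv.symm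
      _ ≤ _ := by
        refine ENNReal.tsum_le_tsum fun n => ?_
        set m := n + 1 with hm
        have hpow : (0:ℝ) < 2 ^ m := by positivity
        -- choose j
        set j : ℕ := max 1 ⌈l * 2 ^ m⌉₊ with hj
        have hjmem : j ∈ Finset.Icc 1 (2 ^ m) := by
          simp only [Finset.mem_Icc]
          constructor
          · exact le_max_left _ _
          · refine max_le (Nat.one_le_two_pow) (Nat.ceil_le.mpr ?_)
            calc l * 2 ^ m ≤ 1 * 2 ^ m := by nlinarith
              _ = ((2 ^ m : ℕ) : ℝ) := by push_cast; ring
        have hjlb : l * 2 ^ m ≤ (j : ℝ) := by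
          have h1 : ⌈l * 2 ^ m⌉₊ ≤ j := le_max_right _ _
          calc l * 2 ^ m ≤ (⌈l * 2 ^ m⌉₊ : ℝ) := Nat.le_ceil _
            _ ≤ (j : ℝ) := Nat.cast_le.mpr h1
        have hjub : (j : ℝ) ≤ l * 2 ^ m + 1 := by
          have h0 : (0:ℝ) ≤ l * 2 ^ m := by positivity
          have h1 : (⌈l * 2 ^ m⌉₊ : ℝ) < l * 2 ^ m + 1 := Nat.ceil_lt_add_one h0
          have : (j : ℝ) = max 1 (⌈l * 2 ^ m⌉₊ : ℝ) := by
            rw [hj]; push_cast [Nat.cast_max]; ring_nf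
          rw [this]
          exact max_le (by linarith) (le_of_lt h1)
        -- distance bound
        have hsq : (l - (j : ℝ) / 2 ^ m) ^ 2 ≤ (((2:ℝ) ^ m)⁻¹) ^ 2 := by
          have hub : l - (j : ℝ) / 2 ^ m ≤ ((2:ℝ) ^ m)⁻¹ := by
            have h2 : l ≤ (j : ℝ) / 2 ^ m := (le_div_iff₀ hpow).mpr hjlb
            have h3 : (0:ℝ) ≤ ((2:ℝ) ^ m)⁻¹ := by positivity
            linarith
          have hlb : -(((2:ℝ) ^ m)⁻¹) ≤ l - (j : ℝ) / 2 ^ m := by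
            have h2 : ((j : ℝ) - 1) / 2 ^ m ≤ l := (div_le_iff₀ hpow).mpr (by linarith)
            rw [sub_div, one_div] at h2
            linarith
          exact sq_le_sq' hlb hub
        -- ENNReal bound on f at j/2^m
        have hofr : ENNReal.ofReal ((((2:ℝ) ^ m)⁻¹) ^ 2)
            = ((2:ℝ≥0∞) ^ m * 2 ^ m)⁻¹ := by
          rw [show ((((2:ℝ) ^ m)⁻¹) ^ 2) = ((2 ^ m * 2 ^ m : ℝ))⁻¹ by
            rw [inv_pow]; ring_nf,
            ENNReal.ofReal_inv_of_pos (by positivity),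
            ENNReal.ofReal_mul (by positivity), ENNReal.ofReal_pow (by norm_num)]
          norm_num
        have hfj : (2:ℝ≥0∞) ^ m * 2 ^ m
            ≤ (ENNReal.ofReal ((l - (j : ℝ) / 2 ^ m) ^ 2))⁻¹ := by
          rw [show (2:ℝ≥0∞) ^ m * 2 ^ m = (ENNReal.ofReal ((((2:ℝ) ^ m)⁻¹) ^ 2))⁻¹ by
            rw [hofr, inv_inv]]
          exact ENNReal.inv_le_inv.mpr (ENNReal.ofReal_le_ofReal hsq)
        -- integral over nth piece
        rw [lintegral_smul_measure, lintegral_smul_measure,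
          lintegral_finset_sum_measure]
        have hsum : (2:ℝ≥0∞) ^ m * 2 ^ m ≤
            ∑ k ∈ Finset.Icc (1:ℕ) (2 ^ m),
              ∫⁻ t : ℝ, (ENNReal.ofReal ((l - t) ^ 2))⁻¹
                ∂(Measure.dirac ((k : ℝ) / 2 ^ m)) := by
          calc (2:ℝ≥0∞) ^ m * 2 ^ m
              ≤ ∫⁻ t : ℝ, (ENNReal.ofReal ((l - t) ^ 2))⁻¹
                ∂(Measure.dirac ((j : ℝ) / 2 ^ m)) := by
                rw [lintegral_dirac' _ hfm]; exact hfj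
            _ ≤ _ := Finset.single_le_sum
                (f := fun k : ℕ => ∫⁻ t : ℝ, (ENNReal.ofReal ((l - t) ^ 2))⁻¹
                  ∂(Measure.dirac ((k : ℝ) / 2 ^ m)))
                (fun k _ => zero_le) hjmem
        have hc : ((2:ℝ≥0∞) ^ m)⁻¹ * ((2:ℝ≥0∞) ^ m * 2 ^ m) = 2 ^ m := by
          rw [← mul_assoc, ENNReal.inv_mul_cancel (pow_ne_zero _ two_ne_zero)
            (ENNReal.pow_ne_top ENNReal.ofNat_ne_top), one_mul]
        calc ENNReal.ofReal (a m) * 2 ^ m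
            = ENNReal.ofReal (a m) * (((2:ℝ≥0∞) ^ m)⁻¹ * ((2:ℝ≥0∞) ^ m * 2 ^ m)) := by
              rw [hc]
          _ ≤ _ := mul_le_mul_right (mul_le_mul_right hsum _) _
  refine ⟨key, ?_⟩
  ext l
  simp only [Set.mem_setOf_eq, Set.mem_empty_iff_false, iff_false, not_and]
  intro hl
  rw [key l hl]
  exact lt_irrefl ⊤
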